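/- Let N ≥ 1, m ≥ 0 and d be natural numbers with K := d − m − N ≥ 1, and let 0 ≤ l_1 < l_2 < … < l_K ≤ d be natural numbers. Then there exist unique complex numbers C_1, …, C_K such that for every i = 1, …, K the coefficient of x^{l_i} in the polynomial (x+1)^{m+N} + ∑_{j=1}^{K} C_j·(x+1)^{m+N+j} is zero. -/

import Mathlib

open Polynomial

private lemma support_X_mul' (g : ℂ[X]) :
    (X * g).support = g.support.map ⟨Nat.succ, Nat.succ_injective⟩ := by
  ext a
  simp only [exists_prop, Finset.mem_map, Function.Embedding.coeFn_mk, Ne, mem_support_iff]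
  cases' a with a
  · simp [coeff_X_mul_zero, Nat.succ_ne_zero]
  rw [mul_comm, coeff_mul_X]
  constructor
  · intro h; exact ⟨a, h, rfl⟩
  · rintro ⟨b, h1, h2⟩
    rwa [← Nat.succ_injective h2]

private lemma rootMult_lt_card_support {α : ℂ} (hα : α ≠ 0) :
    ∀ n (f : ℂ[X]), f.natDegree ≤ n → f ≠ 0 →
      f.rootMultiplicity α < f.support.card := by
  intro n
  induction n with
  | zero =>
    intro f hdeg hf
    have hc : f = C (f.coeff 0) := eq_C_of_natDegree_eq_zero (Nat.le_zero.mp hdeg)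
    have h0 : f.coeff 0 ≠ 0 := fun h => hf (by rw [hc, h, map_zero])
    have : ¬ f.IsRoot α := by
      rw [hc]; simpa [IsRoot] using h0
    rw [rootMultiplicity_eq_zero this]
    exact Finset.card_pos.mpr (nonempty_support_iff.mpr hf)
  | succ n ih =>
    intro f hdeg hf
    by_cases hroot : f.IsRoot α
    · by_cases h0 : f.coeff 0 = 0
      · obtain ⟨g, hg⟩ : X ∣ f := X_dvd_iff.mpr h0
        have hg0 : g ≠ 0 := fun h => hf (by rw [hg, h, mul_zero])
        have hXg : (X * g : ℂ[X]) ≠ 0 := hg ▸ hf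
        have hmul : f.rootMultiplicity α = g.rootMultiplicity α := by
          rw [hg, rootMultiplicity_mul hXg,
            rootMultiplicity_eq_zero (by simpa [IsRoot] using hα), zero_add]
        have hsupp : f.support.card = g.support.card := by
          rw [hg, support_X_mul', Finset.card_map]
        have hdegg : g.natDegree ≤ n := by
          have : f.natDegree = g.natDegree + 1 := by
            rw [hg, natDegree_X_mul hg0]
          omega
        rw [hmul, hsupp]
        exact ih g hdegg hg0
      · have hfd : f.natDegree ≠ 0 := by
          intro h
          have hc : f = C (f.coeff 0) := eq_C_of_natDegree_eq_zero h
          rw [hc] at hroot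
          exact h0 (by simpa [IsRoot] using hroot)
        have hd0 : derivative f ≠ 0 := by
          intro h
          exact hfd (natDegree_eq_zero_of_derivative_eq_zero h)
        have hmul : (derivative f).rootMultiplicity α = f.rootMultiplicity α - 1 :=
          derivative_rootMultiplicity_of_root hroot
        have hpos : 1 ≤ f.rootMultiplicity α := (rootMultiplicity_pos hf).mpr hroot
        have hdegd : (derivative f).natDegree ≤ n := by
          have := natDegree_derivative_lt hfd
          omega
        have hcard : (derivative f).support.card + 1 ≤ f.support.card := by
          have h1 : (derivative f).support.card ≤ (f.support.erase 0).card := by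
            apply Finset.card_le_card_of_injOn (fun k => k + 1)
            · intro k hk
              rw [Finset.mem_coe, mem_support_iff, coeff_derivative] at hk
              simp only [Finset.mem_coe, Finset.mem_erase, mem_support_iff]
              constructor
              · omega
              · intro h; rw [h] at hk; simp at hk
            · intro a _ b _ h; simpa using h
          have h2 : (f.support.erase 0).card = f.support.card - 1 := by
            rw [Finset.card_erase_of_mem (mem_support_iff.mpr h0)]
          have h3 : 1 ≤ f.support.card :=
            Finset.card_pos.mpr (nonempty_support_iff.mpr hf)
          omega
        have := ih (derivative f) hdegd hd0
        omega
    · rw [rootMultiplicity_eq_zero hroot]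
      exact Finset.card_pos.mpr (nonempty_support_iff.mpr hf)

theorem unique_coefficients (N m d K : ℕ) (hN : 1 ≤ N) (hK1 : 1 ≤ K)
    (hK : m + N + K = d)
    (l : Fin K → ℕ) (hlmono : StrictMono l) (hld : ∀ i, l i ≤ d) :
    ∃! c : Fin K → ℂ, ∀ i : Fin K,
      Polynomial.coeff
        ((Polynomial.X + 1) ^ (m + N)
          + ∑ j : Fin K, Polynomial.C (c j) * (Polynomial.X + 1) ^ (m + N + 1 + (j : ℕ)))
        (l i) = 0 := by
  set n := m + N with hn
  -- the matrix of the linear system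
  set M : Matrix (Fin K) (Fin K) ℂ :=
    fun i j => ((X + 1 : ℂ[X]) ^ (n + 1 + (j : ℕ))).coeff (l i) with hM
  set b : Fin K → ℂ := fun i => ((X + 1 : ℂ[X]) ^ n).coeff (l i) with hb
  -- the coefficient condition in linear form
  have hcond : ∀ (c : Fin K → ℂ) (i : Fin K),
      Polynomial.coeff
        ((X + 1 : ℂ[X]) ^ n + ∑ j : Fin K, C (c j) * (X + 1) ^ (n + 1 + (j : ℕ))) (l i)
        = b i + M.mulVec c i := by
    intro c i
    rw [coeff_add, finset_sum_coeff]
    congr 1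
    rw [Matrix.mulVec, dotProduct]
    exact Finset.sum_congr rfl fun j _ => by rw [coeff_C_mul]; exact mul_comm _ _
  -- key: the kernel of M is trivial
  have hker : ∀ c : Fin K → ℂ, M.mulVec c = 0 → c = 0 := by
    intro c hc
    set q : ℂ[X] := ∑ j : Fin K, C (c j) * (X + 1) ^ (n + 1 + (j : ℕ)) with hq
    have hcoeffq : ∀ i : Fin K, q.coeff (l i) = 0 := by
      intro i
      rw [hq, finset_sum_coeff]
      have := congrFun hc i
      rw [Matrix.mulVec, dotProduct] at this
      simpa [coeff_C_mul, hM, mul_comm] using this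
    -- first show q = 0
    have hq0 : q = 0 := by
      by_contra hq0
      -- root multiplicity of -1 is at least n+1
      have hdvd : (X - Polynomial.C (-1 : ℂ)) ^ (n + 1) ∣ q := by
        rw [hq]
        apply Finset.dvd_sum
        intro j _
        apply Dvd.dvd.mul_left
        have h1 : (X - Polynomial.C (-1 : ℂ)) = X + 1 := by
          rw [map_neg, map_one, sub_neg_eq_add]
        rw [h1]
        exact pow_dvd_pow _ (by omega)
      have hmult : n + 1 ≤ q.rootMultiplicity (-1) :=
        (le_rootMultiplicity_iff hq0).mpr hdvd
      -- degree bound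
      have hdeg : q.natDegree ≤ n + K := by
        rw [hq]
        apply natDegree_sum_le_of_forall_le
        intro j _
        refine (natDegree_C_mul_le _ _).trans ?_
        refine (natDegree_pow_le).trans ?_
        have : (X + 1 : ℂ[X]).natDegree ≤ 1 := by
          simpa using (natDegree_X_add_C (1 : ℂ)).le
        have hj : (j : ℕ) < K := j.2
        nlinarith
      -- support is contained in range (n+K+1) minus the l i's
      have hsub : q.support ⊆ (Finset.range (n + K + 1)) \ (Finset.image l Finset.univ) := by
        intro k hk
        rw [Finset.mem_sdiff]
        constructor
        · exact supp_subset_range (by omega) hk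
        · intro hmem
          obtain ⟨i, _, hi⟩ := Finset.mem_image.mp hmem
          rw [← hi] at hk
          exact mem_support_iff.mp hk (hcoeffq i)
      have hcardl : (Finset.image l Finset.univ).card = K := by
        rw [Finset.card_image_of_injective _ hlmono.injective, Finset.card_univ,
          Fintype.card_fin]
      have hlsub : Finset.image l Finset.univ ⊆ Finset.range (n + K + 1) := by
        intro k hk
        obtain ⟨i, _, hi⟩ := Finset.mem_image.mp hk
        rw [Finset.mem_range, ← hi]
        have := hld i
        omega
      have hcard : q.support.card ≤ n + 1 := by
        calc q.support.card ≤ ((Finset.range (n + K + 1)) \ (Finset.image l Finset.univ)).card :=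
              Finset.card_le_card hsub
          _ = (n + K + 1) - K := by
              rw [Finset.card_sdiff_of_subset hlsub, Finset.card_range, hcardl]
          _ = n + 1 := by omega
      have := rootMult_lt_card_support (by norm_num : (-1 : ℂ) ≠ 0) q.natDegree q le_rfl hq0
      omega
    -- from q = 0, deduce c = 0
    funext j₀
    have h := congrArg (aeval (X - Polynomial.C 1 : ℂ[X])) (hq0.symm.trans hq)
    have hX : (X - 1 + 1 : ℂ[X]) = X := by ring
    simp only [map_zero, map_sum, map_mul, map_pow, map_add, aeval_X, aeval_C,
      Polynomial.algebraMap_eq, map_one, hX] at h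
    have h2 := congrArg (fun p : ℂ[X] => p.coeff (n + 1 + (j₀ : ℕ))) h
    simp only [coeff_zero, finset_sum_coeff, coeff_C_mul, coeff_X_pow] at h2
    rw [Finset.sum_eq_single j₀] at h2
    · rw [if_pos rfl, mul_one] at h2
      simpa using h2.symm
    · intro j _ hj
      rw [if_neg, mul_zero]
      intro hcontra
      exact hj (Fin.ext (by omega))
    · intro h; exact absurd (Finset.mem_univ j₀) h
  -- M is injective, hence bijective
  have hinj : Function.Injective M.mulVecLin := by
    rw [← LinearMap.ker_eq_bot, LinearMap.ker_eq_bot']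
    intro c hc
    exact hker c hc
  have hsurj : Function.Surjective M.mulVecLin :=
    LinearMap.injective_iff_surjective.mp hinj
  obtain ⟨c₀, hc₀⟩ := hsurj (-b)
  refine ⟨c₀, ?_, ?_⟩
  · intro i
    rw [hcond c₀ i]
    have : M.mulVec c₀ = -b := hc₀
    rw [this]
    simp
  · intro c hc
    apply hinj
    have h1 : M.mulVec c = -b := by
      funext i
      have := hc i
      rw [hcond c i] at this
      have : M.mulVec c i = -b i := by linear_combination this
      simpa using this
    show M.mulVec c = M.mulVec c₀
    rw [h1]; exact hc₀.symm
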